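/- For every n ∈ ℤ, the object S_{n,∞} is a noetherian object of the abelian category S: every ascending chain of subobjects of S_{n,∞} is eventually stationary. -/

import Mathlib

open CategoryTheory CategoryTheory.Limits

set_option linter.unusedVariables false

/-- The category `S` of sequences of `k`-vector spaces: functors from `ℤ`
(viewed as a poset category) to `k`-vector spaces. -/
abbrev SeqCat (k : Type) [Field k] := ℤ ⥤ ModuleCat k

variable {k : Type} [Field k]

/-- The transition map `d_V^i : V^i ⟶ V^{i+1}` of a sequence `V`. -/
noncomputable def SeqCat.d (V : SeqCat k) (i : ℤ) : V.obj i ⟶ V.obj (i + 1) :=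
  V.map (homOfLE (by omega))

variable (k)

/-- The component in degree `i` of the sequence `S_{a,b}` (for `a ∈ ℤ ∪ {−∞}`,
`b ∈ ℤ ∪ {∞}`), as a submodule of `k`: it is all of `k` if `a ≤ i ≤ b` and `0`
otherwise. -/
noncomputable def SabObj (a : WithBot ℤ) (b : WithTop ℤ) (i : ℤ) : Submodule k k :=
  if a ≤ (i : WithBot ℤ) ∧ (i : WithTop ℤ) ≤ b then ⊤ else ⊥

lemma SabObj_coe_eq_zero {a : WithBot ℤ} {b : WithTop ℤ} {i : ℤ}
    (h : ¬ (a ≤ (i : WithBot ℤ) ∧ (i : WithTop ℤ) ≤ b)) (x : ↥(SabObj k a b i)) :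
    (x : k) = 0 := by
  have hm := x.2
  have he : SabObj k a b i = ⊥ := if_neg h
  exact (Submodule.eq_bot_iff _).1 he _ hm

/-- The transition maps of the sequence `S_{a,b}`: the map from degree `i` to degree `j`
is multiplication by `∏_{m=i}^{j-1} (-1)^m`, i.e. the composite of the maps
`(-1)^m · id` for `i ≤ m < j` (and it is zero when forced to be, i.e. when the target
component vanishes). -/
noncomputable def SabMap (a : WithBot ℤ) (b : WithTop ℤ) (i j : ℤ) :
    ↥(SabObj k a b i) →ₗ[k] ↥(SabObj k a b j) where
  toFun x := if h : a ≤ (j : WithBot ℤ) ∧ (j : WithTop ℤ) ≤ b then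
      ⟨(∏ m ∈ Finset.Ico i j, (-1 : k) ^ m) * (x : k), by
        rw [SabObj, if_pos h]; trivial⟩
    else 0
  map_add' x y := by
    by_cases h : a ≤ (j : WithBot ℤ) ∧ (j : WithTop ℤ) ≤ b
    · simp only [dif_pos h]
      ext
      push_cast
      ring
    · simp only [dif_neg h, add_zero]
  map_smul' c x := by
    by_cases h : a ≤ (j : WithBot ℤ) ∧ (j : WithTop ℤ) ≤ b
    · simp only [dif_pos h, RingHom.id_apply]
      ext
      simp [smul_eq_mul]
      ring
    · simp only [dif_neg h, smul_zero, RingHom.id_apply]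

lemma SabMap_id (a : WithBot ℤ) (b : WithTop ℤ) (i : ℤ) :
    SabMap k a b i i = LinearMap.id := by
  apply LinearMap.ext
  intro x
  by_cases h : a ≤ (i : WithBot ℤ) ∧ (i : WithTop ℤ) ≤ b
  · apply Subtype.ext
    simp [SabMap, h]
  · apply Subtype.ext
    simp [SabMap, h, SabObj_coe_eq_zero k h x]

lemma SabMap_comp (a : WithBot ℤ) (b : WithTop ℤ) {i j l : ℤ}
    (hij : i ≤ j) (hjl : j ≤ l) :
    (SabMap k a b j l).comp (SabMap k a b i j) = SabMap k a b i l := by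
  apply LinearMap.ext
  intro x
  by_cases hl : a ≤ (l : WithBot ℤ) ∧ (l : WithTop ℤ) ≤ b
  · by_cases hj : a ≤ (j : WithBot ℤ) ∧ (j : WithTop ℤ) ≤ b
    · apply Subtype.ext
      simp only [LinearMap.comp_apply, SabMap, LinearMap.coe_mk, AddHom.coe_mk,
        dif_pos hl, dif_pos hj]
      have key : (∏ m ∈ Finset.Ico i j, (-1 : k) ^ m) * (∏ m ∈ Finset.Ico j l, (-1 : k) ^ m)
          = ∏ m ∈ Finset.Ico i l, (-1 : k) ^ m := by
        rw [← Finset.prod_union (Finset.Ico_disjoint_Ico_consecutive i j l),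
          Finset.Ico_union_Ico_eq_Ico hij hjl]
      rw [← key]
      ring
    · have hi : ¬ (a ≤ (i : WithBot ℤ) ∧ (i : WithTop ℤ) ≤ b) := by
        intro hi
        exact hj ⟨le_trans hi.1 (by exact_mod_cast hij),
          le_trans (by exact_mod_cast hjl) hl.2⟩
      apply Subtype.ext
      simp [SabMap, hl, hj, SabObj_coe_eq_zero k hi x]
  · apply Subtype.ext
    simp [SabMap, hl]

/-- The sequence `S_{a,b}` for `a ∈ ℤ ∪ {−∞}` and `b ∈ ℤ ∪ {∞}`: its component in
degree `i` is `k` for `a ≤ i ≤ b` and `0` otherwise, and the transition map in degree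
`i` (within the interval) is `(-1)^i · id_k`. -/
noncomputable def Sab (a : WithBot ℤ) (b : WithTop ℤ) : SeqCat k where
  obj i := ModuleCat.of k (SabObj k a b i)
  map {i j} f := ModuleCat.ofHom (SabMap k a b i j)
  map_id i := by rw [SabMap_id k a b i]; rfl
  map_comp {i j l} f g := by rw [← SabMap_comp k a b (leOfHom f) (leOfHom g)]; rfl

/-- The condition `a ≤ b` for `a ∈ ℤ ∪ {−∞}` and `b ∈ ℤ ∪ {∞}`: the interval `[a,b]`
contains some integer. -/
def SabLE (a : WithBot ℤ) (b : WithTop ℤ) : Prop :=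
  ∃ i : ℤ, a ≤ (i : WithBot ℤ) ∧ (i : WithTop ℤ) ≤ b

section Aux

variable {k : Type} [Field k] (n : ℤ)

local notation "Sn" => Sab k (n : WithBot ℤ) (⊤ : WithTop ℤ)

/-- Any submodule of a submodule of `k` is `⊥` or `⊤`. -/
lemma subSub_eq_bot_or_top (t : Submodule k k) (W : Submodule k ↥t) :
    W = ⊥ ∨ W = ⊤ := by
  have hinj : Function.Injective t.subtype := Subtype.val_injective
  have hmi := Submodule.map_injective_of_injective hinj
  rcases Ideal.eq_bot_or_top (Submodule.map t.subtype W) with h | h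
  · left
    apply hmi
    rw [h]
    simp
  · right
    apply hmi
    have h1 : Submodule.map t.subtype ⊤ = LinearMap.range t.subtype := Submodule.map_top t.subtype
    have h2 : LinearMap.range t.subtype = t := Submodule.range_subtype t
    have ht : t = ⊤ := by
      have := Submodule.map_mono (f := t.subtype) (le_top : W ≤ ⊤)
      rw [h, h1, h2] at this
      exact top_le_iff.1 this
    rw [h, h1, h2]
    exact ht.symm

lemma range_mono_of_le {P Q : Subobject Sn} (h : P ≤ Q) (i : ℤ) :
    LinearMap.range ((Subobject.arrow P).app i).hom ≤
      LinearMap.range ((Subobject.arrow Q).app i).hom := by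
  rw [← Subobject.ofLE_arrow h, NatTrans.comp_app, ModuleCat.hom_comp]
  exact LinearMap.range_comp_le_range _ _

end Aux
section Aux2

variable {k : Type} [Field k] (n : ℤ)

local notation "Sn" => Sab k (n : WithBot ℤ) (⊤ : WithTop ℤ)

lemma sabMap_surjective (i : ℤ) (hi : (n : WithBot ℤ) ≤ (i : WithBot ℤ)) :
    Function.Surjective (SabMap k (n : WithBot ℤ) (⊤ : WithTop ℤ) i (i + 1)) := by
  intro y
  set u : k := ∏ m ∈ Finset.Ico i (i + 1), (-1 : k) ^ m with hu
  have hu0 : u ≠ 0 := by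
    rw [hu]
    apply Finset.prod_ne_zero_iff.2
    intro m _
    exact zpow_ne_zero m (neg_ne_zero.2 one_ne_zero)
  have hmemi : (n : WithBot ℤ) ≤ ((i : ℤ) : WithBot ℤ) ∧ ((i : ℤ) : WithTop ℤ) ≤ ⊤ :=
    ⟨hi, le_top⟩
  have hmem : (n : WithBot ℤ) ≤ ((i + 1 : ℤ) : WithBot ℤ) ∧ ((i + 1 : ℤ) : WithTop ℤ) ≤ ⊤ := by
    refine ⟨le_trans hi ?_, le_top⟩
    exact_mod_cast (by omega : i ≤ i + 1)
  refine ⟨⟨u⁻¹ * (y : k), ?_⟩, ?_⟩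
  · rw [SabObj, if_pos hmemi]; trivial
  · apply Subtype.ext
    simp only [SabMap, LinearMap.coe_mk, AddHom.coe_mk, dif_pos hmem]
    rw [← hu, ← mul_assoc, mul_inv_cancel₀ hu0, one_mul]

/-- The subobject `P` is "full" in degree `i`. -/
def TT (P : Subobject Sn) (i : ℤ) : Prop :=
  LinearMap.range ((Subobject.arrow P).app i).hom = ⊤

lemma TT_mono {P Q : Subobject Sn} (h : P ≤ Q) {i : ℤ} (hP : TT n P i) : TT n Q i :=
  top_le_iff.1 (hP ▸ range_mono_of_le n h i)

lemma TT_of_lt {P : Subobject Sn} {i : ℤ} (hi : i < n) : TT n P i := by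
  have hns : ¬ ((n : WithBot ℤ) ≤ ((i : ℤ) : WithBot ℤ) ∧ ((i : ℤ) : WithTop ℤ) ≤ ⊤) := by
    rintro ⟨h1, -⟩
    exact absurd (by exact_mod_cast h1) (not_le.2 hi)
  haveI : Subsingleton ↥((Sab k (n : WithBot ℤ) (⊤ : WithTop ℤ)).obj i) := by
    show Subsingleton ↥(SabObj k (n : WithBot ℤ) (⊤ : WithTop ℤ) i)
    rw [SabObj, if_neg hns]
    infer_instance
  exact Subsingleton.elim _ _

lemma TT_step {P : Subobject Sn} {i : ℤ} (hi : n ≤ i) (h : TT n P i) : TT n P (i + 1) := by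
  rw [TT, Submodule.eq_top_iff']
  intro y
  obtain ⟨w, hw⟩ := sabMap_surjective n i (by exact_mod_cast hi) y
  have hwmem : w ∈ LinearMap.range ((Subobject.arrow P).app i).hom := by rw [h]; trivial
  obtain ⟨p, hp⟩ := hwmem
  refine ⟨((Subobject.underlying.obj P).map (homOfLE (by omega : i ≤ i + 1))).hom p, ?_⟩
  have hnat := (Subobject.arrow P).naturality (homOfLE (by omega : i ≤ i + 1))
  have h2 := LinearMap.congr_fun (congrArg ModuleCat.Hom.hom hnat) p
  show ((Subobject.underlying.obj P).map (homOfLE (by omega : i ≤ i + 1)) ≫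
      (Subobject.arrow P).app (i + 1)).hom p = y
  rw [h2]
  show ((Sab k (n : WithBot ℤ) (⊤ : WithTop ℤ)).map (homOfLE (by omega : i ≤ i + 1))).hom
      (((Subobject.arrow P).app i).hom p) = y
  rw [hp]
  exact hw

lemma TT_upclosed {P : Subobject Sn} (j : ℕ) {j' : ℕ} (hjj : j ≤ j')
    (h : TT n P (n + j)) : TT n P (n + j') := by
  induction j' , hjj using Nat.le_induction with
  | base => exact h
  | succ j' hj ih =>
    have he : (n + (j' + 1 : ℕ) : ℤ) = (n + j') + 1 := by push_cast; ring
    rw [he]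
    exact TT_step n (by omega) ih

end Aux2
section Aux3

variable {k : Type} [Field k] (n : ℤ)

local notation "Sn" => Sab k (n : WithBot ℤ) (⊤ : WithTop ℤ)

lemma range_bot_or_top (P : Subobject Sn) (i : ℤ) :
    LinearMap.range ((Subobject.arrow P).app i).hom = ⊥ ∨
      LinearMap.range ((Subobject.arrow P).app i).hom = ⊤ :=
  subSub_eq_bot_or_top (SabObj k (n : WithBot ℤ) (⊤ : WithTop ℤ) i)
    (LinearMap.range ((Subobject.arrow P).app i).hom)

lemma subobject_ext {P Q : Subobject Sn} (h : P ≤ Q)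
    (hT : ∀ i : ℤ, TT n P i ↔ TT n Q i) : P = Q := by
  have hrange : ∀ i : ℤ, LinearMap.range ((Subobject.arrow P).app i).hom
      = LinearMap.range ((Subobject.arrow Q).app i).hom := by
    intro i
    by_cases hQ : TT n Q i
    · rw [(hT i).2 hQ, hQ]
    · have hQb : LinearMap.range ((Subobject.arrow Q).app i).hom = ⊥ :=
        (range_bot_or_top n Q i).resolve_right hQ
      have hPb : LinearMap.range ((Subobject.arrow P).app i).hom = ⊥ := by
        rcases range_bot_or_top n P i with h' | h'
        · exact h'
        · exact absurd ((hT i).1 h') hQ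
      rw [hPb, hQb]
  let f := Subobject.ofLE P Q h
  have hfa : f ≫ Subobject.arrow Q = Subobject.arrow P := Subobject.ofLE_arrow h
  have hiso : ∀ i : ℤ, IsIso (f.app i) := by
    intro i
    have hQinj : Function.Injective ((Subobject.arrow Q).app i) :=
      (ModuleCat.mono_iff_injective _).1 inferInstance
    have happ : f.app i ≫ (Subobject.arrow Q).app i = (Subobject.arrow P).app i := by
      rw [← NatTrans.comp_app, hfa]
    have hinj : Function.Injective (f.app i) := by
      have hc : Function.Injective (((Subobject.arrow Q).app i) ∘ (f.app i)) := by
        have he : ⇑((Subobject.arrow P).app i) = ((Subobject.arrow Q).app i) ∘ (f.app i) := by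
          rw [← happ]; rfl
        rw [← he]
        exact (ModuleCat.mono_iff_injective _).1 inferInstance
      exact Function.Injective.of_comp hc
    have hsurj : Function.Surjective (f.app i) := by
      intro y
      have hy : (Subobject.arrow Q).app i y ∈ LinearMap.range ((Subobject.arrow P).app i).hom := by
        rw [hrange i]; exact ⟨y, rfl⟩
      obtain ⟨z, hz⟩ := hy
      refine ⟨z, hQinj ?_⟩
      rw [← hz, ← happ]
      rfl
    exact (ConcreteCategory.isIso_iff_bijective (f.app i)).2 (by exact ⟨hinj, hsurj⟩)
  haveI : ∀ i : ℤ, IsIso (f.app i) := hiso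
  haveI : IsIso f := NatIso.isIso_of_isIso_app f
  exact Subobject.eq_of_comm (asIso f) hfa

end Aux3
/-- For every `n ∈ ℤ`, the object `S_{n,∞}` is a noetherian object of the abelian
category `S`: every ascending chain of subobjects of `S_{n,∞}` is eventually
stationary. -/
theorem Sninfty_noetherian (n : ℤ)
    (c : ℕ →o Subobject (Sab k (n : WithBot ℤ) (⊤ : WithTop ℤ))) :
    ∃ N : ℕ, ∀ m : ℕ, N ≤ m → c m = c N := by
  classical
  set g : ℕ → ℕ∞ := fun m =>
    if h : ∃ j : ℕ, TT n (c m) (n + j) then ((Nat.find h : ℕ) : ℕ∞) else ⊤ with hg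
  have hmem : ∀ (m : ℕ) (j : ℕ), TT n (c m) (n + j) ↔ g m ≤ (j : ℕ∞) := by
    intro m j
    constructor
    · intro hT
      have hex : ∃ j : ℕ, TT n (c m) (n + j) := ⟨j, hT⟩
      rw [hg]
      simp only [dif_pos hex]
      exact_mod_cast Nat.find_le hT
    · intro hle
      by_cases hex : ∃ j : ℕ, TT n (c m) (n + j)
      · rw [hg] at hle
        simp only [dif_pos hex] at hle
        have hfind : Nat.find hex ≤ j := by exact_mod_cast hle
        exact TT_upclosed n _ hfind (Nat.find_spec hex)
      · rw [hg] at hle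
        simp only [dif_neg hex] at hle
        exact absurd (top_le_iff.1 hle).symm (by simp)
  have hanti : ∀ m m' : ℕ, m ≤ m' → g m' ≤ g m := by
    intro m m' hmm
    by_cases hex : ∃ j : ℕ, TT n (c m) (n + j)
    · have hT' : TT n (c m') (n + Nat.find hex) :=
        TT_mono n (c.mono hmm) (Nat.find_spec hex)
      have hle := (hmem m' _).1 hT'
      rw [hg]
      simp only [dif_pos hex]
      exact hle
    · rw [hg]
      simp only [dif_neg hex]
      exact le_top
  have hwf : WellFounded ((· > ·) : ℕ∞ᵒᵈ → ℕ∞ᵒᵈ → Prop) := IsWellFounded.wf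
  obtain ⟨N, hN⟩ := (wellFoundedGT_iff_monotone_chain_condition (α := ℕ∞ᵒᵈ)).1 ⟨hwf⟩
    ⟨fun m => OrderDual.toDual (g m), fun x y hxy => hanti x y hxy⟩
  refine ⟨N, fun m hm => ?_⟩
  have hgeq : g m = g N := congrArg OrderDual.ofDual (hN m hm).symm
  refine (subobject_ext n (c.mono hm) fun i => ?_).symm
  by_cases hi : i < n
  · exact iff_of_true (TT_of_lt n hi) (TT_of_lt n hi)
  · push_neg at hi
    obtain ⟨j, rfl⟩ : ∃ j : ℕ, i = n + j := ⟨(i - n).toNat, by omega⟩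
    rw [hmem N j, hmem m j, hgeq]
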